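/- Suppose Pr₀(λ⁺, λ⁺, 2, ω) holds for a regular uncountable cardinal λ. Then a λ⁺-Gross space of dimension λ⁺ exists over every field of size at most λ: defining Φ(e_α, e_β) = c{α,β} (interpreting the colors 0,1 as field elements 0,1) for a colouring c witnessing Pr₀, the resulting symmetric bilinear space has the property that every subspace of dimension λ⁺ has orthogonal complement of dimension < λ⁺. -/

import Mathlib

open Cardinal

/-- The orthogonal complement of a subspace with respect to a bilinear form. -/
def ortho {F : Type*} {E : Type*} [Field F] [AddCommGroup E] [Module F E]
    (Φ : E →ₗ[F] E →ₗ[F] F) (U : Submodule F E) : Submodule F E where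
  carrier := {x | ∀ y ∈ U, Φ x y = 0}
  add_mem' := by
    intro a b ha hb y hy
    simp [map_add, ha y hy, hb y hy]
  zero_mem' := by
    intro y hy; simp
  smul_mem' := by
    intro c x hx y hy
    simp [hx y hy]

noncomputable def bform {F : Type} [Field F] {I : Type 1} (B : I → I → F) :
    (I →₀ F) →ₗ[F] (I →₀ F) →ₗ[F] F :=
  Finsupp.lsum F fun α => LinearMap.id.smulRight (Finsupp.linearCombination F (B α))

@[simp] lemma bform_single {F : Type} [Field F] {I : Type 1} (B : I → I → F) (α β : I) (r s : F) :
    bform B (Finsupp.single α r) (Finsupp.single β s) = r * (s * B α β) := by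
  simp [bform, Finsupp.linearCombination_single, smul_eq_mul]

lemma bform_symm {F : Type} [Field F] {I : Type 1} (B : I → I → F)
    (hB : ∀ α β, B α β = B β α) (x y : I →₀ F) : bform B x y = bform B y x := by
  have : bform B = (bform B).flip := by
    ext a b
    simp [hB a b, mul_comm]
  conv_lhs => rw [this]
  simp [LinearMap.flip_apply]

lemma sum_single_eq {ι : Type*} {M : Type*} [AddCommMonoid M] (l : ι →₀ M) (s : Finset ι)
    (h : l.support ⊆ s) : ∑ i ∈ s, Finsupp.single i (l i) = l := by
  classical
  ext j
  rw [Finsupp.finset_sum_apply]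
  simp only [Finsupp.single_apply]
  rw [Finset.sum_ite_eq' s j (fun i => l i)]
  by_cases hj : j ∈ s
  · simp [hj]
  · simp only [hj, if_false]
    by_contra hne
    exact hj (h (Finsupp.mem_support_iff.2 fun h0 => hne h0.symm))

lemma sigma_snd_eq {α : Type*} {m n : ℕ} {x : (Fin m → α) × (Fin m → α)}
    {y : (Fin n → α) × (Fin n → α)}
    (h : (⟨m, x⟩ : Σ k, (Fin k → α) × (Fin k → α)) = ⟨n, y⟩) (hmn : m = n) :
    ∀ j : Fin n, y.1 j = x.1 (Fin.cast hmn.symm j) ∧ y.2 j = x.2 (Fin.cast hmn.symm j) := by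
  subst hmn
  obtain ⟨-, h2⟩ := Sigma.mk.inj_iff.1 h
  rw [heq_iff_eq] at h2
  subst h2
  intro j
  exact ⟨rfl, rfl⟩

lemma bform_sum_sum {F : Type} [Field F] {I : Type 1} (B : I → I → F) {n : ℕ}
    (a₁ a₂ : Fin n → I) (g f : Fin n → F) :
    bform B (∑ ζ, Finsupp.single (a₁ ζ) (g ζ)) (∑ ζ, Finsupp.single (a₂ ζ) (f ζ)) =
      ∑ ζ₁, ∑ ζ₂, g ζ₁ * (f ζ₂ * B (a₁ ζ₁) (a₂ ζ₂)) := by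
  rw [map_sum]
  refine (Finset.sum_congr rfl fun ζ₂ _ => ?_).trans Finset.sum_comm
  rw [map_sum, LinearMap.sum_apply]
  exact Finset.sum_congr rfl fun ζ₁ _ => bform_single B _ _ _ _

lemma avoid {F : Type} [Field F] {lam : Cardinal.{0}} (hlam : Cardinal.aleph0 ≤ lam)
    {V : Submodule F ({o : Ordinal // o < (Order.succ lam).ord} →₀ F)}
    (hV : Cardinal.lift.{1} (Order.succ lam) ≤ Module.rank F V)
    (γ : Ordinal) (hγ : γ < (Order.succ lam).ord) :
    ∃ v : {o : Ordinal // o < (Order.succ lam).ord} →₀ F, v ∈ V ∧ v ≠ 0 ∧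
      ∀ i ∈ v.support, γ < i.val := by
  set s : Set {o : Ordinal // o < (Order.succ lam).ord} := {i | i.val ≤ γ} with hs
  set ψ : V →ₗ[F] (s →₀ F) :=
    (Finsupp.lsubtypeDomain (M := F) (R := F) s).comp V.subtype with hψ
  by_cases hker : LinearMap.ker ψ = ⊥
  · exfalso
    have hinj : Function.Injective ψ := by
      intro a b hab
      have h0 := LinearMap.ker_eq_bot'.1 hker (a - b) (by
        rw [hψ] at hab ⊢
        simp only [LinearMap.comp_apply, Submodule.subtype_apply, Submodule.coe_sub] at hab ⊢
        rw [map_sub, hab, sub_self])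
      exact sub_eq_zero.1 h0
    have h1 : Module.rank F V ≤ Module.rank F (s →₀ F) :=
      LinearMap.rank_le_of_injective ψ hinj
    have h2 : Module.rank F (s →₀ F) = Cardinal.lift.{0} #s := rank_finsupp_self F s
    have h3 : #s ≤ Cardinal.lift.{1} lam := by
      have hinj2 : Function.Injective (fun i : s => (⟨i.1.1,
          lt_of_le_of_lt i.2 (Order.lt_succ γ)⟩ : Set.Iio (γ+1))) := by
        intro a b hab
        simp only [Subtype.mk.injEq] at hab
        have hab' := congrArg Subtype.val hab
        exact Subtype.ext (Subtype.ext hab')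
      calc #s ≤ #(Set.Iio (γ+1)) := Cardinal.mk_le_of_injective hinj2
        _ = Cardinal.lift.{1} (γ+1).card := Ordinal.mk_Iio_ordinal _
        _ ≤ Cardinal.lift.{1} lam := by
            rw [Cardinal.lift_le, Ordinal.card_add, Ordinal.card_one]
            have : γ.card < Order.succ lam := Cardinal.lt_ord.1 hγ
            have h4 : γ.card ≤ lam := Order.lt_succ_iff.1 this
            calc γ.card + 1 ≤ lam + 1 := add_le_add_left h4 1
              _ = lam := Cardinal.add_one_eq hlam
    have : Cardinal.lift.{1} (Order.succ lam) ≤ Cardinal.lift.{1} lam := by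
      calc Cardinal.lift.{1} (Order.succ lam) ≤ Module.rank F V := hV
        _ ≤ Cardinal.lift.{0} #s := h1.trans h2.le
        _ = #s := Cardinal.lift_id'.{0,1} _
        _ ≤ Cardinal.lift.{1} lam := h3
    exact absurd (Cardinal.lift_le.1 this) (not_le.2 (Order.lt_succ lam))
  · obtain ⟨v', hv'mem, hv'ne⟩ := (Submodule.ne_bot_iff _).1 hker
    refine ⟨v'.1, v'.2, ?_, ?_⟩
    · intro h0
      exact hv'ne (Subtype.ext h0)
    · intro i hi
      by_contra hle
      have his : i ∈ s := not_lt.1 hle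
      have hk := LinearMap.mem_ker.1 hv'mem
      have : (ψ v') ⟨i, his⟩ = 0 := by rw [hk]; rfl
      rw [hψ] at this
      simp only [LinearMap.comp_apply, Finsupp.lsubtypeDomain_apply,
        Finsupp.subtypeDomain_apply, Submodule.subtype_apply] at this
      exact (Finsupp.mem_support_iff.1 hi) this

lemma mkD_le {F : Type} [Field F] {lam : Cardinal.{0}} (hlam : Cardinal.aleph0 ≤ lam)
    (hF : #F ≤ lam) : #(Σ n : ℕ, (Fin n → F) × (Fin n → F)) ≤ lam := by
  have hfin : ∀ n : ℕ, #(Fin n → F) ≤ lam := by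
    intro n
    calc #(Fin n → F) = #F ^ (n : Cardinal) := by
          rw [← Cardinal.power_def, Cardinal.mk_fin]
      _ ≤ lam ^ (n : Cardinal) := Cardinal.power_le_power_right hF
      _ ≤ lam := Cardinal.power_nat_le hlam
  calc #(Σ n : ℕ, (Fin n → F) × (Fin n → F))
      = Cardinal.sum (fun n : ℕ => #((Fin n → F) × (Fin n → F))) := Cardinal.mk_sigma _
    _ ≤ Cardinal.sum (fun _ : ℕ => lam) := by
        apply Cardinal.sum_le_sum
        intro n
        calc #(Fin n → F) * #(Fin n → F) ≤ lam * lam :=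
              mul_le_mul' (hfin n) (hfin n)
          _ = lam := Cardinal.mul_eq_self hlam
    _ = #ℕ * lam := Cardinal.sum_const' _ _
    _ = lam := by
        rw [Cardinal.mk_nat]
        exact Cardinal.aleph0_mul_eq hlam

open Classical in
set_option maxHeartbeats 1000000 in
noncomputable def recMu (T : Set Ordinal.{0}) (B : Ordinal.{0} → Ordinal.{0}) :
    Ordinal.{0} → Ordinal.{0} :=
  WellFounded.fix Ordinal.lt_wf fun o ih =>
    if h : ∃ γ', (Ordinal.bsup.{0,0} o fun o' h' => B (ih o' h')) ≤ γ' ∧ γ' ∈ T then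
      h.choose
    else 0

open Classical in
lemma recMu_eq (T : Set Ordinal.{0}) (B : Ordinal.{0} → Ordinal.{0}) (o : Ordinal.{0}) :
    recMu T B o =
      if h : ∃ γ', (Ordinal.bsup.{0,0} o fun o' _ => B (recMu T B o')) ≤ γ' ∧ γ' ∈ T then
        h.choose
      else 0 := by
  conv_lhs => rw [recMu, WellFounded.fix_eq]
  rfl

lemma recMu_spec {c : Cardinal.{0}} (hc : c.IsRegular) {T : Set Ordinal.{0}}
    {B : Ordinal.{0} → Ordinal.{0}}
    (hTsub : T ⊆ Set.Iio c.ord)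
    (hT : ∀ γ < c.ord, ∃ γ', γ ≤ γ' ∧ γ' ∈ T)
    (hB : ∀ γ < c.ord, B γ < c.ord) :
    ∀ o < c.ord, recMu T B o ∈ T ∧ ∀ o' < o, B (recMu T B o') ≤ recMu T B o := by
  intro o
  induction o using Ordinal.induction with
  | h o IH =>
    intro ho
    have hprev : ∀ o' (h' : o' < o), recMu T B o' ∈ T := fun o' h' =>
      (IH o' h' (h'.trans ho)).1
    have hgb : (Ordinal.bsup.{0,0} o fun o' _ => B (recMu T B o')) < c.ord := by
      apply Ordinal.bsup_lt_ord
      · rw [hc.cof_eq]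
        exact Cardinal.lt_ord.1 ho
      · intro i hi
        exact hB _ (hTsub (hprev i hi))
    have hex : ∃ γ', (Ordinal.bsup.{0,0} o fun o' _ => B (recMu T B o')) ≤ γ' ∧ γ' ∈ T :=
      (hT _ hgb).imp fun γ' h => ⟨h.1, h.2⟩
    have heq : recMu T B o = hex.choose := by
      rw [recMu_eq, dif_pos hex]
    constructor
    · rw [heq]; exact hex.choose_spec.2
    · intro o' ho'
      rw [heq]
      exact le_trans (Ordinal.le_bsup _ o' ho') hex.choose_spec.1

set_option maxHeartbeats 2000000 in
/-- From a colouring witnessing Pr₀(λ⁺, λ⁺, 2, ω) (λ regular uncountable), the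
bilinear form defined on the basis by the colours yields a λ⁺-Gross space of
dimension λ⁺ over any field of size at most λ. -/
theorem gross_space_of_Pr0 (lam : Cardinal.{0})
    (hreg : lam.IsRegular) (hunc : Cardinal.aleph0 < lam)
    (F : Type) [Field F] (hF : Cardinal.mk F ≤ lam)
    (c : {o : Ordinal // o < (Order.succ lam).ord} →
         {o : Ordinal // o < (Order.succ lam).ord} → Fin 2)
    (hsym : ∀ α β, c α β = c β α)
    (hPr0 : ∀ (ξ : ℕ)
        (a : {o : Ordinal // o < (Order.succ lam).ord} → Fin ξ →
             {o : Ordinal // o < (Order.succ lam).ord}),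
        (∀ ν, StrictMono (a ν)) →
        Function.Injective (fun p : {o : Ordinal // o < (Order.succ lam).ord} × Fin ξ =>
          a p.1 p.2) →
        ∀ h : Fin ξ → Fin ξ → Fin 2,
          ∃ ν₁ ν₂, ν₁ < ν₂ ∧ ∀ ζ₁ ζ₂ : Fin ξ, c (a ν₁ ζ₁) (a ν₂ ζ₂) = h ζ₁ ζ₂) :
    ∃ Φ : ({o : Ordinal // o < (Order.succ lam).ord} →₀ F) →ₗ[F]
          ({o : Ordinal // o < (Order.succ lam).ord} →₀ F) →ₗ[F] F,
      (∀ x y, Φ x y = Φ y x) ∧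
      (∀ α β, α ≠ β →
        Φ (Finsupp.single α 1) (Finsupp.single β 1) =
          (if c α β = 0 then (0 : F) else 1)) ∧
      ∀ U : Submodule F ({o : Ordinal // o < (Order.succ lam).ord} →₀ F),
        Cardinal.lift.{1} (Order.succ lam) ≤ Module.rank F U →
        Module.rank F (ortho Φ U) < Cardinal.lift.{1} (Order.succ lam) := by
  classical
  set Bc : {o : Ordinal // o < (Order.succ lam).ord} →
      {o : Ordinal // o < (Order.succ lam).ord} → F :=
    fun α β => if c α β = 0 then 0 else 1 with hBc
  have hsymB : ∀ α β, Bc α β = Bc β α := by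
    intro α β
    simp only [hBc, hsym α β]
  refine ⟨bform Bc, bform_symm Bc hsymB, ?_, ?_⟩
  · intro α β _
    simp only [bform_single, one_mul]
    rfl
  intro U hU
  by_contra hcon
  rw [not_lt] at hcon
  have hlam0 : Cardinal.aleph0 ≤ lam := hunc.le
  have hregs : (Order.succ lam).IsRegular := Cardinal.isRegular_succ hlam0
  have hords : Order.IsSuccLimit (Order.succ lam).ord :=
    Cardinal.isSuccLimit_ord (hlam0.trans (Order.le_succ lam))
  have hκpos : (0 : Ordinal) < (Order.succ lam).ord := hords.pos
  -- choose vectors in U and in the orthogonal complement with large supports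
  have hexU : ∀ γ : Ordinal, ∃ v : {o : Ordinal // o < (Order.succ lam).ord} →₀ F,
      γ < (Order.succ lam).ord → v ∈ U ∧ v ≠ 0 ∧ ∀ i ∈ v.support, γ < i.val := by
    intro γ
    by_cases h : γ < (Order.succ lam).ord
    · obtain ⟨v, h1, h2, h3⟩ := avoid hlam0 hU γ h
      exact ⟨v, fun _ => ⟨h1, h2, h3⟩⟩
    · exact ⟨0, fun hh => absurd hh h⟩
  have hexW : ∀ γ : Ordinal, ∃ v : {o : Ordinal // o < (Order.succ lam).ord} →₀ F,
      γ < (Order.succ lam).ord → v ∈ ortho (bform Bc) U ∧ v ≠ 0 ∧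
        ∀ i ∈ v.support, γ < i.val := by
    intro γ
    by_cases h : γ < (Order.succ lam).ord
    · obtain ⟨v, h1, h2, h3⟩ := avoid hlam0 hcon γ h
      exact ⟨v, fun _ => ⟨h1, h2, h3⟩⟩
    · exact ⟨0, fun hh => absurd hh h⟩
  choose u hu using hexU
  choose w hw using hexW
  set s : Ordinal → Finset {o : Ordinal // o < (Order.succ lam).ord} :=
    fun γ => (u γ).support ∪ (w γ).support with hs
  set data : Ordinal → (Σ k : ℕ, (Fin k → F) × (Fin k → F)) := fun γ =>
    ⟨(s γ).card, (fun j => u γ (((s γ).orderIsoOfFin rfl) j).1,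
                  fun j => w γ (((s γ).orderIsoOfFin rfl) j).1)⟩ with hdata
  -- find an unbounded fiber of `data`
  have hfiber : ∃ d, ∀ γ, γ < (Order.succ lam).ord →
      ∃ γ', γ ≤ γ' ∧ γ' < (Order.succ lam).ord ∧ data γ' = d := by
    by_contra hno
    push_neg at hno
    choose bnd hbnd1 hbnd2 using hno
    have hβ : iSup bnd < (Order.succ lam).ord := by
      apply Ordinal.iSup_lt_ord
      · rw [hregs.cof_eq]
        exact lt_of_le_of_lt (mkD_le hlam0 hF) (Order.lt_succ lam)
      · exact hbnd1
    exact hbnd2 (data (iSup bnd)) (iSup bnd) (Ordinal.le_iSup bnd _) hβ rfl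
  obtain ⟨⟨n, f, g⟩, hd⟩ := hfiber
  set T : Set Ordinal :=
    {γ | γ < (Order.succ lam).ord ∧ data γ = ⟨n, (f, g)⟩} with hT
  set Bnd : Ordinal → Ordinal := fun γ => ((s γ).sup fun i => i.val + 1) ⊔ (γ + 1) with hBnd
  have hBndlt : ∀ γ < (Order.succ lam).ord, Bnd γ < (Order.succ lam).ord := by
    intro γ hγ
    apply max_lt
    · rw [Finset.sup_lt_iff (by rw [Ordinal.bot_eq_zero]; exact hκpos)]
      intro i hi
      rw [Ordinal.add_one_eq_succ]
      exact hords.succ_lt i.2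
    · rw [Ordinal.add_one_eq_succ]
      exact hords.succ_lt hγ
  have hBndgt : ∀ γ, ∀ i ∈ s γ, i.val < Bnd γ := by
    intro γ i hi
    have h1 : i.val + 1 ≤ (s γ).sup fun i => i.val + 1 :=
      Finset.le_sup (f := fun i => i.val + 1) hi
    have h2 : i.val < i.val + 1 := by
      rw [Ordinal.add_one_eq_succ]; exact Order.lt_succ _
    exact lt_of_lt_of_le (lt_of_lt_of_le h2 h1) (le_max_left _ _)
  have hTsub : T ⊆ Set.Iio (Order.succ lam).ord := fun γ hγ => hγ.1
  have hTub : ∀ γ < (Order.succ lam).ord, ∃ γ', γ ≤ γ' ∧ γ' ∈ T := by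
    intro γ hγ
    obtain ⟨γ', h1, h2, h3⟩ := hd γ hγ
    exact ⟨γ', h1, h2, h3⟩
  have hspec := recMu_spec hregs hTsub hTub hBndlt
  set μ : Ordinal → Ordinal := recMu T Bnd with hμ
  have hμT : ∀ ν : {o : Ordinal // o < (Order.succ lam).ord}, μ ν.1 ∈ T :=
    fun ν => (hspec ν.1 ν.2).1
  have hμlt : ∀ ν : {o : Ordinal // o < (Order.succ lam).ord},
      μ ν.1 < (Order.succ lam).ord := fun ν => (hμT ν).1
  have hμdata : ∀ ν : {o : Ordinal // o < (Order.succ lam).ord},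
      (⟨(s (μ ν.1)).card, (fun j => u (μ ν.1) (((s (μ ν.1)).orderIsoOfFin rfl) j).1,
          fun j => w (μ ν.1) (((s (μ ν.1)).orderIsoOfFin rfl) j).1)⟩ :
        Σ k : ℕ, (Fin k → F) × (Fin k → F)) = ⟨n, (f, g)⟩ :=
    fun ν => (hμT ν).2
  have hcard : ∀ ν : {o : Ordinal // o < (Order.succ lam).ord},
      (s (μ ν.1)).card = n := fun ν => congrArg Sigma.fst (hμdata ν)
  set A : {o : Ordinal // o < (Order.succ lam).ord} → Fin n →
      {o : Ordinal // o < (Order.succ lam).ord} :=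
    fun ν ζ => (((s (μ ν.1)).orderIsoOfFin rfl) (Fin.cast (hcard ν).symm ζ)).1 with hA
  have hAmem : ∀ ν ζ, A ν ζ ∈ s (μ ν.1) :=
    fun ν ζ => (((s (μ ν.1)).orderIsoOfFin rfl) (Fin.cast (hcard ν).symm ζ)).2
  have hfA : ∀ ν ζ, f ζ = u (μ ν.1) (A ν ζ) :=
    fun ν ζ => (sigma_snd_eq (hμdata ν) (hcard ν) ζ).1
  have hgA : ∀ ν ζ, g ζ = w (μ ν.1) (A ν ζ) :=
    fun ν ζ => (sigma_snd_eq (hμdata ν) (hcard ν) ζ).2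
  have hsgt : ∀ γ < (Order.succ lam).ord, ∀ i ∈ s γ, γ < i.val := by
    intro γ hγ i hi
    rcases Finset.mem_union.1 hi with h | h
    · exact (hu γ hγ).2.2 i h
    · exact (hw γ hγ).2.2 i h
  have hmono : ∀ ν, StrictMono (A ν) := by
    intro ν ζ₁ ζ₂ hlt
    have hlt' : Fin.cast (hcard ν).symm ζ₁ < Fin.cast (hcard ν).symm ζ₂ :=
      Fin.lt_def.2 (Fin.lt_def.1 hlt)
    exact Subtype.coe_lt_coe.2 (((s (μ ν.1)).orderIsoOfFin rfl).strictMono hlt')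
  have key : ∀ ν₁ ν₂ : {o : Ordinal // o < (Order.succ lam).ord}, ∀ ζ₁ ζ₂ : Fin n,
      ν₁ < ν₂ → A ν₁ ζ₁ < A ν₂ ζ₂ := by
    intro ν₁ ν₂ ζ₁ ζ₂ hlt
    have h1 : (A ν₁ ζ₁).val < Bnd (μ ν₁.1) := hBndgt _ _ (hAmem ν₁ ζ₁)
    have h2 : Bnd (μ ν₁.1) ≤ μ ν₂.1 := (hspec ν₂.1 ν₂.2).2 ν₁.1 hlt
    have h3 : μ ν₂.1 < (A ν₂ ζ₂).val := hsgt _ (hμlt ν₂) _ (hAmem ν₂ ζ₂)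
    exact Subtype.coe_lt_coe.1 ((h1.trans_le h2).trans h3)
  have hinj : Function.Injective
      (fun p : {o : Ordinal // o < (Order.succ lam).ord} × Fin n => A p.1 p.2) := by
    intro p q hpq
    simp only at hpq
    rcases lt_trichotomy p.1 q.1 with h | h | h
    · exact absurd hpq (ne_of_lt (key p.1 q.1 p.2 q.2 h))
    · obtain ⟨ν, ζp⟩ := p
      obtain ⟨ν', ζq⟩ := q
      simp only at h
      subst h
      simp only at hpq
      have := (hmono ν).injective hpq
      rw [this]
    · exact absurd hpq.symm (ne_of_lt (key q.1 p.1 q.2 p.2 h))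
  -- find positions with nonzero coefficients
  set ν₀ : {o : Ordinal // o < (Order.succ lam).ord} := ⟨0, hκpos⟩ with hν₀
  obtain ⟨iu, hiu⟩ := Finsupp.support_nonempty_iff.2 (hu _ (hμlt ν₀)).2.1
  obtain ⟨iw, hiw⟩ := Finsupp.support_nonempty_iff.2 (hw _ (hμlt ν₀)).2.1
  have hius : iu ∈ s (μ ν₀.1) := Finset.mem_union_left _ hiu
  have hiws : iw ∈ s (μ ν₀.1) := Finset.mem_union_right _ hiw
  set ζf : Fin n := Fin.cast (hcard ν₀) (((s (μ ν₀.1)).orderIsoOfFin rfl).symm ⟨iu, hius⟩)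
    with hζf
  set ζg : Fin n := Fin.cast (hcard ν₀) (((s (μ ν₀.1)).orderIsoOfFin rfl).symm ⟨iw, hiws⟩)
    with hζg
  have hAζf : A ν₀ ζf = iu := by
    calc A ν₀ ζf
        = ((((s (μ ν₀.1)).orderIsoOfFin rfl)
            (((s (μ ν₀.1)).orderIsoOfFin rfl).symm ⟨iu, hius⟩)) :
            {o : Ordinal // o < (Order.succ lam).ord}) := rfl
      _ = iu := by rw [OrderIso.apply_symm_apply]
  have hAζg : A ν₀ ζg = iw := by
    calc A ν₀ ζg
        = ((((s (μ ν₀.1)).orderIsoOfFin rfl)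
            (((s (μ ν₀.1)).orderIsoOfFin rfl).symm ⟨iw, hiws⟩)) :
            {o : Ordinal // o < (Order.succ lam).ord}) := rfl
      _ = iw := by rw [OrderIso.apply_symm_apply]
  have hfζf : f ζf ≠ 0 := by
    rw [hfA ν₀ ζf, hAζf]
    exact Finsupp.mem_support_iff.1 hiu
  have hgζg : g ζg ≠ 0 := by
    rw [hgA ν₀ ζg, hAζg]
    exact Finsupp.mem_support_iff.1 hiw
  -- apply the colouring property
  obtain ⟨ν₁, ν₂, hν12, hcol⟩ := hPr0 n A hmono hinj
    (fun ζ₁ ζ₂ => if ζ₁ = ζg ∧ ζ₂ = ζf then 1 else 0)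
  -- representations as sums of singles
  have hrepw : (∑ ζ : Fin n, Finsupp.single (A ν₁ ζ) (g ζ)) = w (μ ν₁.1) := by
    calc ∑ ζ : Fin n, Finsupp.single (A ν₁ ζ) (g ζ)
        = ∑ ζ : Fin n, Finsupp.single (A ν₁ ζ) (w (μ ν₁.1) (A ν₁ ζ)) := by
          exact Finset.sum_congr rfl fun ζ _ => by rw [← hgA ν₁ ζ]
      _ = ∑ i ∈ s (μ ν₁.1), Finsupp.single i (w (μ ν₁.1) i) := by
          rw [← Finset.sum_coe_sort (s (μ ν₁.1))
            (fun i => Finsupp.single i (w (μ ν₁.1) i))]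
          exact Fintype.sum_equiv
            ((finCongr (hcard ν₁).symm).trans ((s (μ ν₁.1)).orderIsoOfFin rfl).toEquiv)
            _ _ fun ζ => rfl
      _ = w (μ ν₁.1) := sum_single_eq _ _ Finset.subset_union_right
  have hrepu : (∑ ζ : Fin n, Finsupp.single (A ν₂ ζ) (f ζ)) = u (μ ν₂.1) := by
    calc ∑ ζ : Fin n, Finsupp.single (A ν₂ ζ) (f ζ)
        = ∑ ζ : Fin n, Finsupp.single (A ν₂ ζ) (u (μ ν₂.1) (A ν₂ ζ)) := by
          exact Finset.sum_congr rfl fun ζ _ => by rw [← hfA ν₂ ζ]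
      _ = ∑ i ∈ s (μ ν₂.1), Finsupp.single i (u (μ ν₂.1) i) := by
          rw [← Finset.sum_coe_sort (s (μ ν₂.1))
            (fun i => Finsupp.single i (u (μ ν₂.1) i))]
          exact Fintype.sum_equiv
            ((finCongr (hcard ν₂).symm).trans ((s (μ ν₂.1)).orderIsoOfFin rfl).toEquiv)
            _ _ fun ζ => rfl
      _ = u (μ ν₂.1) := sum_single_eq _ _ Finset.subset_union_left
  -- the bilinear form evaluates to zero by orthogonality...
  have horth : bform Bc (w (μ ν₁.1)) (u (μ ν₂.1)) = 0 :=
    (hw _ (hμlt ν₁)).1 _ (hu _ (hμlt ν₂)).1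
  -- ... but also to a nonzero value by the colouring
  have hval : bform Bc (w (μ ν₁.1)) (u (μ ν₂.1)) = g ζg * f ζf := by
    rw [← hrepw, ← hrepu, bform_sum_sum]
    have hterm : ∀ ζ₁ ζ₂ : Fin n, g ζ₁ * (f ζ₂ * Bc (A ν₁ ζ₁) (A ν₂ ζ₂)) =
        if ζ₂ = ζf then (if ζ₁ = ζg then g ζ₁ * f ζ₂ else 0) else 0 := by
      intro ζ₁ ζ₂
      have hc2 := hcol ζ₁ ζ₂
      by_cases h1 : ζ₁ = ζg <;> by_cases h2 : ζ₂ = ζf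
      · have hcc : c (A ν₁ ζ₁) (A ν₂ ζ₂) = 1 := by rw [hc2, if_pos ⟨h1, h2⟩]
        rw [if_pos h2, if_pos h1]
        simp only [hBc]
        rw [hcc, if_neg (by decide : ¬(1 : Fin 2) = 0)]
        ring
      · have hcc : c (A ν₁ ζ₁) (A ν₂ ζ₂) = 0 := by rw [hc2, if_neg (by tauto)]
        rw [if_neg h2]
        simp only [hBc]
        rw [hcc, if_pos rfl]
        ring
      · have hcc : c (A ν₁ ζ₁) (A ν₂ ζ₂) = 0 := by rw [hc2, if_neg (by tauto)]
        rw [if_pos h2, if_neg h1]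
        simp only [hBc]
        rw [hcc, if_pos rfl]
        ring
      · have hcc : c (A ν₁ ζ₁) (A ν₂ ζ₂) = 0 := by rw [hc2, if_neg (by tauto)]
        rw [if_neg h2]
        simp only [hBc]
        rw [hcc, if_pos rfl]
        ring
    rw [Finset.sum_congr rfl fun ζ₁ _ => Finset.sum_congr rfl fun ζ₂ _ => hterm ζ₁ ζ₂]
    simp only [Finset.sum_ite_eq', Finset.mem_univ, if_true]
  rw [hval] at horth
  exact mul_ne_zero hgζg hfζf horth
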